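/- A countably generated flat Mittag-Leffler module over a commutative ring R is projective. -/

import Mathlib

universe u

open TensorProduct

/-- `M` is a Mittag-Leffler module: for every family of `R`-modules `(Q i)`, the canonical map
`M ⊗ (∏ i, Q i) → ∏ i, (M ⊗ Q i)` is injective. -/
def IsMittagLeffler (R : Type u) [CommRing R]
    (M : Type u) [AddCommGroup M] [Module R M] : Prop :=
  ∀ (ι : Type u) (Q : ι → Type u) [∀ i, AddCommGroup (Q i)] [∀ i, Module R (Q i)],
    Function.Injective (TensorProduct.piRightHom R R M Q)

section
variable {R : Type u} [CommRing R] {M : Type u} [AddCommGroup M] [Module R M]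

private lemma inner_vanish {p n : ℕ}
    (a : (Fin p → R) →ₗ[R] (Fin n → R)) :
    (∑ k, a (Pi.single k 1) ⊗ₜ[R]
      (Submodule.Quotient.mk (Pi.single k 1) :
        (Fin p → R) ⧸ LinearMap.range
          (Fintype.linearCombination R (fun l k => a (Pi.single k 1) l)))) = 0 := by
  classical
  set tr : (Fin n → R) →ₗ[R] (Fin p → R) :=
    Fintype.linearCombination R (fun l k => a (Pi.single k 1) l) with htr
  set C := (Fin p → R) ⧸ LinearMap.range tr with hC
  show (∑ k, a (Pi.single k 1) ⊗ₜ[R]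
      (Submodule.Quotient.mk (Pi.single k 1) : C)) = 0
  have expand : ∀ k : Fin p, a (Pi.single k 1) ⊗ₜ[R]
      (Submodule.Quotient.mk (Pi.single k 1) : C)
      = ∑ l, Pi.single l (1:R) ⊗ₜ[R]
          (a (Pi.single k 1) l • Submodule.Quotient.mk (Pi.single k 1) : C) := by
    intro k
    conv_lhs => rw [show a (Pi.single k 1) = ∑ l, Pi.single l (a (Pi.single k 1) l) from
      (Finset.univ_sum_single _).symm]
    rw [TensorProduct.sum_tmul]
    refine Finset.sum_congr rfl fun l _ => ?_
    have hps : Pi.single l (a (Pi.single k 1) l)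
        = a (Pi.single k 1) l • (Pi.single l (1:R) : Fin n → R) := by
      ext k'
      simp [Pi.single_apply]
    rw [hps, TensorProduct.smul_tmul]
  rw [Finset.sum_congr rfl fun k _ => expand k, Finset.sum_comm]
  refine Finset.sum_eq_zero fun l _ => ?_
  rw [← TensorProduct.tmul_sum]
  have : (∑ k, (a (Pi.single k 1) l • Submodule.Quotient.mk (Pi.single k 1) : C)) = 0 := by
    have hmk : (∑ k, (a (Pi.single k 1) l • Submodule.Quotient.mk (Pi.single k 1) : C))
        = Submodule.Quotient.mk (∑ k, a (Pi.single k 1) l • (Pi.single k (1:R) : Fin p → R)) := by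
      simp only [← Submodule.mkQ_apply, ← map_smul, ← map_sum]
    rw [hmk, Submodule.Quotient.mk_eq_zero]
    refine ⟨Pi.single l 1, ?_⟩
    rw [htr, Fintype.linearCombination_apply_single, one_smul]
    ext k
    simp [Pi.single_apply, smul_eq_mul, Finset.sum_apply, eq_comm]
  rw [this, TensorProduct.tmul_zero]


private lemma component_vanish {p n : ℕ} (x : (Fin p → R) →ₗ[R] M)
    (a : (Fin p → R) →ₗ[R] (Fin n → R)) (b : (Fin n → R) →ₗ[R] M) (hab : b ∘ₗ a = x) :
    (∑ k, x (Pi.single k 1) ⊗ₜ[R]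
      (Submodule.Quotient.mk (Pi.single k 1) :
        (Fin p → R) ⧸ LinearMap.range
          (Fintype.linearCombination R (fun l k => a (Pi.single k 1) l)))) = 0 := by
  have hx : ∀ k : Fin p, x (Pi.single k 1) = b (a (Pi.single k 1)) := by
    intro k; rw [← hab]; rfl
  calc (∑ k, x (Pi.single k 1) ⊗ₜ[R]
        (Submodule.Quotient.mk (Pi.single k 1) :
          (Fin p → R) ⧸ LinearMap.range
            (Fintype.linearCombination R (fun l k => a (Pi.single k 1) l))))
      = LinearMap.rTensor _ b (∑ k, a (Pi.single k 1) ⊗ₜ[R] Submodule.Quotient.mk (Pi.single k 1)) := by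
        rw [map_sum]
        exact Finset.sum_congr rfl fun k _ => by rw [hx k, LinearMap.rTensor_tmul]
    _ = 0 := by rw [inner_vanish a, map_zero]

set_option synthInstance.maxHeartbeats 1000000 in
set_option maxHeartbeats 2000000 in
/-- Key Mittag-Leffler dominance lemma. -/
private lemma exists_dominating (hflat : Module.Flat R M)
    (hML : ∀ (ι : Type u) (Q : ι → Type u) [∀ i, AddCommGroup (Q i)] [∀ i, Module R (Q i)],
      Function.Injective (TensorProduct.piRightHom R R M Q))
    {p : ℕ} (x : (Fin p → R) →ₗ[R] M) :
    ∃ (q : ℕ) (v : (Fin p → R) →ₗ[R] (Fin q → R)) (w : (Fin q → R) →ₗ[R] M),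
      w ∘ₗ v = x ∧
      ∀ (n : ℕ) (a : (Fin p → R) →ₗ[R] (Fin n → R)) (b : (Fin n → R) →ₗ[R] M),
        b ∘ₗ a = x → ∃ h : (Fin n → R) →ₗ[R] (Fin q → R), h ∘ₗ a = v := by
  classical
  haveI := hflat
  set I : Type u :=
    Σ n : ℕ, {ab : ((Fin p → R) →ₗ[R] (Fin n → R)) × ((Fin n → R) →ₗ[R] M) // ab.2 ∘ₗ ab.1 = x}
    with hI
  set tr : ∀ j : I, (Fin j.1 → R) →ₗ[R] (Fin p → R) :=
    fun j => Fintype.linearCombination R (fun l k => j.2.1.1 (Pi.single k 1) l) with htr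
  set C : I → Type u := fun j => (Fin p → R) ⧸ LinearMap.range (tr j) with hC
  -- the canonical element of M ⊗ ∏ C j is zero
  have hxi : (∑ k, x (Pi.single k 1) ⊗ₜ[R]
      (fun j => (Submodule.Quotient.mk (Pi.single k 1) : C j))) = 0 := by
    apply hML I C
    rw [map_zero, map_sum]
    funext j
    rw [Finset.sum_apply]
    simp only [piRightHom_tmul]
    exact component_vanish x j.2.1.1 j.2.1.2 j.2.2
  -- swap the tensor factors
  have hswap : (∑ i : ULift.{u} (Fin p),
      (fun j => (Submodule.Quotient.mk (Pi.single i.down 1) : C j))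
        ⊗ₜ[R] x (Pi.single i.down 1)) = (0 : (∀ j, C j) ⊗[R] M) := by
    calc (∑ i : ULift.{u} (Fin p),
        (fun j => (Submodule.Quotient.mk (Pi.single i.down 1) : C j))
          ⊗ₜ[R] x (Pi.single i.down 1))
        = ∑ k : Fin p, (TensorProduct.comm R M (∀ j, C j))
            (x (Pi.single k 1) ⊗ₜ[R] fun j => (Submodule.Quotient.mk (Pi.single k 1) : C j)) := by
          refine Fintype.sum_equiv (Equiv.ulift (α := Fin p)) _ _ fun i => ?_
          rw [TensorProduct.comm_tmul]
          rfl
      _ = 0 := by rw [← map_sum, hxi, map_zero]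
  -- apply the equational criterion for vanishing
  have hinj : Function.Injective (LinearMap.rTensor M
      (Submodule.span R (Set.range (fun i : ULift.{u} (Fin p) =>
        (fun j => (Submodule.Quotient.mk (Pi.single i.down 1) : C j))))).subtype) :=
    Module.Flat.rTensor_preserves_injective_linearMap _ (Submodule.injective_subtype _)
  obtain ⟨κ₀, aa, y, h1, h2⟩ :=
    (TensorProduct.vanishesTrivially_of_sum_tmul_eq_zero_of_rTensor_injective R hinj hswap)
  let κ := Fin κ₀
  set q := Fintype.card κ with hq
  set eq : Fin q ≃ κ := (Fintype.equivFin κ).symm with heq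
  -- construct v and w
  set v : (Fin p → R) →ₗ[R] (Fin q → R) :=
    Fintype.linearCombination R (fun k : Fin p => fun l : Fin q => aa ⟨k⟩ (eq l)) with hv
  set w : (Fin q → R) →ₗ[R] M :=
    Fintype.linearCombination R (fun l : Fin q => y (eq l)) with hw
  have hve : ∀ k : Fin p, v (Pi.single k 1) = fun l => aa ⟨k⟩ (eq l) := by
    intro k
    rw [hv, Fintype.linearCombination_apply_single, one_smul]
  refine ⟨q, v, w, ?_, ?_⟩
  · apply (Pi.basisFun R (Fin p)).ext
    intro k
    rw [Pi.basisFun_apply]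
    show w (v (Pi.single k 1)) = x (Pi.single k 1)
    rw [hve k, hw, Fintype.linearCombination_apply]
    have : ∀ l : Fin q, aa ⟨k⟩ (eq l) • y (eq l) = (fun c => aa ⟨k⟩ c • y c) (eq l) := fun l => rfl
    rw [Finset.sum_congr rfl fun l _ => this l, Equiv.sum_comp eq (fun c => aa ⟨k⟩ c • y c)]
    exact (h1 ⟨k⟩).symm
  · intro n a b hab
    set j : I := ⟨n, ⟨(a, b), hab⟩⟩ with hj
    -- each column of aa is in the range of tr j
    have hcol : ∀ l : Fin q, ∃ z : Fin n → R, tr j z = fun k => aa ⟨k⟩ (eq l) := by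
      intro l
      have h2l := congrFun (h2 (eq l)) j
      rw [Finset.sum_apply] at h2l
      simp only [Pi.smul_apply, Pi.zero_apply] at h2l
      have : (Submodule.Quotient.mk (∑ i : ULift.{u} (Fin p),
          aa i (eq l) • (Pi.single i.down (1:R) : Fin p → R)) :
            (Fin p → R) ⧸ LinearMap.range (tr j)) = 0 := by
        rw [← h2l]
        simp only [← Submodule.mkQ_apply, ← map_smul, ← map_sum]
      rw [Submodule.Quotient.mk_eq_zero] at this
      obtain ⟨z, hz⟩ := this
      refine ⟨z, ?_⟩
      rw [hz]
      calc (∑ i : ULift.{u} (Fin p), aa i (eq l) • (Pi.single i.down (1:R) : Fin p → R))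
          = ∑ k : Fin p, (Pi.single k (aa ⟨k⟩ (eq l)) : Fin p → R) := by
            refine Fintype.sum_equiv (Equiv.ulift (α := Fin p)) _ _ fun i => ?_
            ext k'
            simp [Pi.single_apply]
        _ = fun k => aa ⟨k⟩ (eq l) := Finset.univ_sum_single _
    choose z hz using hcol
    refine ⟨Fintype.linearCombination R (fun i : Fin n => fun l : Fin q => z l i), ?_⟩
    apply (Pi.basisFun R (Fin p)).ext
    intro k
    rw [Pi.basisFun_apply]
    show Fintype.linearCombination R (fun i (l : Fin q) => z l i) (a (Pi.single k 1))
      = v (Pi.single k 1)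
    rw [hve k, Fintype.linearCombination_apply]
    ext l
    rw [Finset.sum_apply]
    have := congrFun (hz l) k
    rw [htr, Fintype.linearCombination_apply] at this
    rw [Finset.sum_apply] at this
    simp only [Pi.smul_apply, smul_eq_mul] at this ⊢
    rw [← this]
    exact Finset.sum_congr rfl fun i _ => mul_comm _ _


private lemma step_lemma (hflat : Module.Flat R M)
    (hML : ∀ (ι : Type u) (Q : ι → Type u) [∀ i, AddCommGroup (Q i)] [∀ i, Module R (Q i)],
      Function.Injective (TensorProduct.piRightHom R R M Q))
    (mg : M) {k : ℕ} (g : (Fin k → R) →ₗ[R] M) :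
    ∃ (k' : ℕ) (g' : (Fin k' → R) →ₗ[R] M) (f : (Fin k → R) →ₗ[R] (Fin k' → R)),
      g' ∘ₗ f = g ∧ mg ∈ LinearMap.range g' ∧
      ∀ (N : Type u) [AddCommGroup N] [Module R N] [Module.Free R N] [Module.Finite R N]
        (a : (Fin k → R) →ₗ[R] N) (b : N →ₗ[R] M), b ∘ₗ a = g →
        ∃ h : N →ₗ[R] (Fin k' → R), h ∘ₗ a = f := by
  classical
  obtain ⟨q, v, w, hwv, hdom⟩ := exists_dominating hflat hML g
  -- extend by one coordinate to hit the generator mg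
  set ext : (Fin q → R) →ₗ[R] (Fin (q+1) → R) :=
    Fintype.linearCombination R (fun l : Fin q => (Pi.single l.castSucc 1 : Fin (q+1) → R))
    with hext
  set g' : (Fin (q+1) → R) →ₗ[R] M :=
    Fintype.linearCombination R
      (fun l : Fin (q+1) => if h : (l : ℕ) < q then w (Pi.single ⟨l, h⟩ 1) else mg) with hg'
  have hge : g' ∘ₗ ext = w := by
    apply (Pi.basisFun R (Fin q)).ext
    intro l
    rw [Pi.basisFun_apply]
    show g' (ext (Pi.single l 1)) = w (Pi.single l 1)
    rw [hext, Fintype.linearCombination_apply_single, one_smul, hg',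
      Fintype.linearCombination_apply_single, one_smul]
    have hlt : ((l.castSucc : Fin (q+1)) : ℕ) < q := l.isLt
    rw [dif_pos hlt]
    congr 1
  refine ⟨q+1, g', ext ∘ₗ v, ?_, ?_, ?_⟩
  · rw [← LinearMap.comp_assoc, hge, hwv]
  · refine ⟨Pi.single (Fin.last q) 1, ?_⟩
    rw [hg', Fintype.linearCombination_apply_single, one_smul, dif_neg (by simp)]
  · intro N _ _ _ _ a b hab
    -- identify N with Fin c → R
    set bs := Module.Free.chooseBasis R N with hbs
    set c := Fintype.card (Module.Free.ChooseBasisIndex R N) with hc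
    set e : N ≃ₗ[R] (Fin c → R) :=
      bs.equivFun.trans
        (LinearEquiv.funCongrLeft R R (Fintype.equivFin (Module.Free.ChooseBasisIndex R N)).symm)
      with he
    have hab' : (b ∘ₗ e.symm.toLinearMap) ∘ₗ (e.toLinearMap ∘ₗ a) = g := by
      rw [show (b ∘ₗ e.symm.toLinearMap) ∘ₗ (e.toLinearMap ∘ₗ a) = b ∘ₗ a by
        ext z; simp]
      exact hab
    obtain ⟨h, hh⟩ := hdom c (e.toLinearMap ∘ₗ a) (b ∘ₗ e.symm.toLinearMap) hab'
    refine ⟨ext ∘ₗ (h ∘ₗ e.toLinearMap), ?_⟩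
    have : (h ∘ₗ e.toLinearMap) ∘ₗ a = v := by
      rw [← hh]; ext z; simp
    rw [LinearMap.comp_assoc, this]

set_option maxHeartbeats 1000000 in
theorem projective_of_cg_flat_ml
    (R : Type u) [CommRing R]
    (M : Type u) [AddCommGroup M] [Module R M]
    (hcount : ∃ S : Set M, S.Countable ∧ Submodule.span R S = ⊤)
    (hflat : Module.Flat R M)
    (hML : ∀ (ι : Type u) (Q : ι → Type u) [∀ i, AddCommGroup (Q i)] [∀ i, Module R (Q i)],
      Function.Injective (TensorProduct.piRightHom R R M Q)) :
    Module.Projective R M := by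
  classical
  -- enumerate generators
  obtain ⟨S, hSc, hSs⟩ := hcount
  obtain ⟨mseq, hmseq⟩ := (hSc.insert 0).exists_eq_range (Set.insert_nonempty 0 S)
  have hmspan : Submodule.span R (Set.range mseq) = ⊤ := by
    rw [← hmseq, Submodule.span_insert_zero, hSs]
  -- the chain of finite free modules
  have step := fun (n : ℕ) (kg : Σ k : ℕ, ((Fin k → R) →ₗ[R] M)) =>
    step_lemma hflat hML (mseq n) kg.2
  let c : ℕ → Σ k : ℕ, ((Fin k → R) →ₗ[R] M) := fun n =>
    Nat.rec ⟨0, 0⟩ (fun n prev =>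
      ⟨(step n prev).choose, (step n prev).choose_spec.choose⟩) n
  let k : ℕ → ℕ := fun n => (c n).1
  let g : ∀ n, (Fin (k n) → R) →ₗ[R] M := fun n => (c n).2
  let f : ∀ n, (Fin (k n) → R) →ₗ[R] (Fin (k (n+1)) → R) := fun n =>
    (step n (c n)).choose_spec.choose_spec.choose
  have hspec : ∀ n, g (n+1) ∘ₗ f n = g n ∧ mseq n ∈ LinearMap.range (g (n+1)) ∧
      ∀ (N : Type u) [AddCommGroup N] [Module R N] [Module.Free R N] [Module.Finite R N]
        (a : (Fin (k n) → R) →ₗ[R] N) (b : N →ₗ[R] M), b ∘ₗ a = g n →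
        ∃ h : N →ₗ[R] (Fin (k (n+1)) → R), h ∘ₗ a = f n := fun n =>
    (step n (c n)).choose_spec.choose_spec.choose_spec
  have hgf : ∀ n, g (n+1) ∘ₗ f n = g n := fun n => (hspec n).1
  have hgen : ∀ n, mseq n ∈ LinearMap.range (g (n+1)) := fun n => (hspec n).2.1
  have hdom := fun n => (hspec n).2.2
  haveI := hflat
  -- kernel elements die at the next stage
  have hker : ∀ (n : ℕ) (z : Fin (k n) → R), g n z = 0 → f n z = 0 := by
    intro n z hz
    obtain ⟨κ, a, y, hya, haz⟩ :=
      Module.Flat.exists_factorization_of_apply_eq_zero_of_free (R := R) (M := M)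
        (N := Fin (k n) → R) (f := z) (x := g n) hz
    set e := Finsupp.linearEquivFunOnFinite R R (Fin κ) with he
    have hfact : (y ∘ₗ e.symm.toLinearMap) ∘ₗ (e.toLinearMap ∘ₗ a) = g n := by
      rw [show (y ∘ₗ e.symm.toLinearMap) ∘ₗ (e.toLinearMap ∘ₗ a) = y ∘ₗ a by ext u; simp]
      exact hya.symm
    obtain ⟨h, hh⟩ := hdom n (Fin κ → R) (e.toLinearMap ∘ₗ a) (y ∘ₗ e.symm.toLinearMap) hfact
    have : f n z = h ((e.toLinearMap ∘ₗ a) z) := by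
      rw [← hh]; rfl
    rw [this]
    simp [haz]
  -- one-step stabilization maps
  have hstab : ∀ n : ℕ, ∃ h : (Fin (k (n+2)) → R) →ₗ[R] (Fin (k (n+1)) → R),
      h ∘ₗ (f (n+1) ∘ₗ f n) = f n := by
    intro n
    apply hdom n (Fin (k (n+2)) → R) (f (n+1) ∘ₗ f n) (g (n+2))
    rw [← LinearMap.comp_assoc, hgf (n+1), hgf n]
  choose hmap hmap_spec using hstab
  -- the direct sum presentation
  let D := DirectSum ℕ (fun n => Fin (k n) → R)
  let lofD : ∀ n, (Fin (k n) → R) →ₗ[R] D := fun n => DirectSum.lof R ℕ (fun n => Fin (k n) → R) n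
  let π : D →ₗ[R] M := DirectSum.toModule R ℕ M g
  let d : D →ₗ[R] D := DirectSum.toModule R ℕ D (fun n => lofD n - lofD (n+1) ∘ₗ f n)
  have hπlof : ∀ n (z : Fin (k n) → R), π (lofD n z) = g n z := fun n z =>
    DirectSum.toModule_lof (R := R) (ι := ℕ) (N := M) (φ := g) n z
  have hdlof : ∀ n (z : Fin (k n) → R), d (lofD n z) = lofD n z - lofD (n+1) (f n z) := by
    intro n z
    have := DirectSum.toModule_lof (R := R) (ι := ℕ)
      (φ := fun n => lofD n - lofD (n+1) ∘ₗ f n) n z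
    rw [this]
    rfl
  have hπd : ∀ n (z : Fin (k n) → R), π (d (lofD n z)) = 0 := by
    intro n z
    rw [hdlof, map_sub, hπlof, hπlof]
    have : g (n+1) (f n z) = g n z := by rw [← hgf n]; rfl
    rw [this, sub_self]
  -- surjectivity of π
  have hπsurj : Function.Surjective π := by
    intro m
    have hm : m ∈ ⨆ n, LinearMap.range (g n) := by
      have : Submodule.span R (Set.range mseq) ≤ ⨆ n, LinearMap.range (g n) := by
        rw [Submodule.span_le]
        rintro _ ⟨t, rfl⟩
        exact Submodule.mem_iSup_of_mem (t+1) (hgen t)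
      rw [hmspan] at this
      exact this trivial
    have hle : (⨆ n, LinearMap.range (g n)) ≤ LinearMap.range π := by
      refine iSup_le fun n => ?_
      rintro _ ⟨z, rfl⟩
      exact ⟨lofD n z, hπlof n z⟩
    obtain ⟨u, hu⟩ := hle hm
    exact ⟨u, hu⟩
  -- exactness at the middle
  have L1 : ∀ (N : ℕ) (u : D), (∀ i, N ≤ i → u i = 0) →
      ∃ z : Fin (k N) → R, u - lofD N z ∈ LinearMap.range d ∧ g N z = π u := by
    intro N
    induction N with
    | zero =>
      intro u hu
      have : u = 0 := by
        apply DFinsupp.ext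
        intro i
        rw [hu i (Nat.zero_le i)]
        rfl
      subst this
      exact ⟨0, by simp, by simp⟩
    | succ N ih =>
      intro u hu
      set u' := u - lofD N (u N) with hu'
      have hu'supp : ∀ i, N ≤ i → u' i = 0 := by
        intro i hi
        rcases eq_or_lt_of_le hi with rfl | hlt
        · rw [hu']
          rw [DFinsupp.sub_apply]
          have : ((DirectSum.lof R ℕ (fun n => Fin (k n) → R) N) (u N)) N = u N :=
            DirectSum.lof_apply (R := R) (M := fun n => Fin (k n) → R) N (u N)
          rw [show ((lofD N) (u N)) N = u N from this, sub_self]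
        · rw [hu']
          have h1 : u i = 0 := hu i hlt
          have h2 : ((lofD N) (u N)) i = 0 := by
            show ((DirectSum.lof R ℕ (fun n => Fin (k n) → R) N) (u N)) i = 0
            rw [DirectSum.lof_eq_of, DirectSum.of_eq_of_ne _ _ _ (Nat.ne_of_lt hlt).symm]
          rw [DFinsupp.sub_apply, h1, h2, sub_zero]
      obtain ⟨z', hz1, hz2⟩ := ih u' hu'supp
      refine ⟨f N (z' + u N), ?_, ?_⟩
      · have key : u - lofD (N+1) (f N (z' + u N))
            = (u' - lofD N z') + d (lofD N (z' + u N)) := by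
          rw [hdlof, hu']
          simp only [map_add]
          abel
        rw [key]
        exact Submodule.add_mem _ hz1 ⟨_, rfl⟩
      · have : g (N+1) (f N (z' + u N)) = g N (z' + u N) := by rw [← hgf N]; rfl
        rw [this, map_add, hz2, hu', map_sub, hπlof]
        abel
  have hexact : ∀ u : D, π u = 0 → u ∈ LinearMap.range d := by
    intro u hu
    obtain ⟨N, hN⟩ := Finset.exists_nat_subset_range (DFinsupp.support u)
    have hsupp : ∀ i, N ≤ i → u i = 0 := by
      intro i hi
      by_contra h
      have := hN (DFinsupp.mem_support_iff.mpr h)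
      rw [Finset.mem_range] at this
      omega
    obtain ⟨z, hz1, hz2⟩ := L1 N u hsupp
    rw [hu] at hz2
    have hfz : f N z = 0 := hker N z hz2
    have : lofD N z ∈ LinearMap.range d := by
      refine ⟨lofD N z, ?_⟩
      rw [hdlof, hfz, map_zero, sub_zero]
    have := Submodule.add_mem _ hz1 this
    simpa using this
  -- construct the retraction of d via one-step Mittag-Leffler stabilization
  let b : ∀ n, (Fin (k (n+1)) → R) →ₗ[R] D := fun n =>
    Nat.rec 0 (fun n bn => (bn - lofD (n+1)) ∘ₗ hmap n) n
  let ρ : ∀ n, (Fin (k n) → R) →ₗ[R] D := fun n => lofD n + (b n) ∘ₗ f n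
  have hrel : ∀ n (z : Fin (k n) → R), ρ n z = lofD n z + ρ (n+1) (f n z) := by
    intro n z
    show lofD n z + b n (f n z)
      = lofD n z + (lofD (n+1) (f n z) + b (n+1) (f (n+1) (f n z)))
    congr 1
    have hh : b (n+1) (f (n+1) (f n z)) = (b n - lofD (n+1)) (hmap n (f (n+1) (f n z))) := rfl
    have hmapz : hmap n (f (n+1) (f n z)) = f n z := by
      have := LinearMap.congr_fun (hmap_spec n) z
      exact this
    rw [hh, hmapz, LinearMap.sub_apply]
    abel
  let ρtot : D →ₗ[R] D := DirectSum.toModule R ℕ D ρ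
  have hρ : ∀ n (z : Fin (k n) → R), ρtot (lofD n z) = ρ n z := fun n z =>
    DirectSum.toModule_lof (R := R) (ι := ℕ) (N := D) (φ := ρ) n z
  have hρd : ∀ n (z : Fin (k n) → R), ρtot (d (lofD n z)) = lofD n z := by
    intro n z
    rw [hdlof, map_sub, hρ, hρ, hrel n z]
    abel
  have hρdcomp : ρtot ∘ₗ d = LinearMap.id := by
    refine DirectSum.linearMap_ext R fun n => LinearMap.ext fun z => ?_
    exact hρd n z
  have hπdcomp : π ∘ₗ d = 0 := by
    refine DirectSum.linearMap_ext R fun n => LinearMap.ext fun z => ?_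
    exact hπd n z
  -- the splitting
  let σ : D →ₗ[R] D := LinearMap.id - d ∘ₗ ρtot
  have hkerσ : LinearMap.ker π ≤ LinearMap.ker σ := by
    intro u hu
    obtain ⟨w, rfl⟩ := hexact u (LinearMap.mem_ker.mp hu)
    have : ρtot (d w) = w := LinearMap.congr_fun hρdcomp w
    show d w - d (ρtot (d w)) = 0
    rw [this, sub_self]
  let s : M →ₗ[R] D :=
    (LinearMap.ker π).liftQ σ hkerσ ∘ₗ
      (LinearMap.quotKerEquivOfSurjective π hπsurj).symm.toLinearMap
  have hsec : π ∘ₗ s = LinearMap.id := by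
    apply LinearMap.ext
    intro m
    obtain ⟨u, rfl⟩ := hπsurj m
    have h1 : (LinearMap.quotKerEquivOfSurjective π hπsurj) (Submodule.Quotient.mk u) = π u := by
      simp [LinearMap.quotKerEquivOfSurjective, LinearMap.quotKerEquivRange_apply_mk]
    have h2 : (LinearMap.quotKerEquivOfSurjective π hπsurj).symm (π u)
        = Submodule.Quotient.mk u := by
      rw [← h1, LinearEquiv.symm_apply_apply]
    show π (s (π u)) = π u
    have h3 : s (π u) = σ u := by
      show (LinearMap.ker π).liftQ σ hkerσ
        ((LinearMap.quotKerEquivOfSurjective π hπsurj).symm (π u)) = σ u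
      rw [h2, Submodule.liftQ_apply]
    rw [h3]
    show π (u - d (ρtot u)) = π u
    rw [map_sub, show π (d (ρtot u)) = 0 from LinearMap.congr_fun hπdcomp (ρtot u), sub_zero]
  haveI : Module.Projective R D :=
    inferInstanceAs (Module.Projective R (DirectSum ℕ (fun n => Fin (k n) → R)))
  exact Module.Projective.of_split s π hsec

end


/-- A countably generated flat Mittag-Leffler module is projective. -/
theorem projective_of_countably_generated_flat_mittagLeffler
    (R : Type u) [CommRing R]
    (M : Type u) [AddCommGroup M] [Module R M]
    (hcount : ∃ S : Set M, S.Countable ∧ Submodule.span R S = ⊤)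
    (hflat : Module.Flat R M) (hML : IsMittagLeffler R M) :
    Module.Projective R M := by
  exact projective_of_cg_flat_ml R M hcount hflat hML
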